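/- For every real y > 0, y·H(y) = H(1/y), where H(y) := 2y G′(y) + y² G″(y) and G(y) := ∑_{n ∈ ℤ} exp(−πn²y²). -/

import Mathlib

open Complex Filter Set Topology

/-- `G(y) = θ(y²) = ∑_{n ∈ ℤ} exp(−πn²y²)`. -/
noncomputable def G (y : ℝ) : ℝ := ∑' n : ℤ, Real.exp (-Real.pi * (n : ℝ) ^ 2 * y ^ 2)

noncomputable def Phi (y : ℝ) : ℝ := (jacobiTheta ((y : ℂ) ^ 2 * Complex.I)).re

lemma ofReal_G (y : ℝ) : ((G y : ℝ) : ℂ) = jacobiTheta ((y : ℂ) ^ 2 * Complex.I) := by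
  rw [G, Complex.ofReal_tsum, jacobiTheta]
  refine tsum_congr fun n => ?_
  rw [Complex.ofReal_exp]
  congr 1
  push_cast
  ring_nf
  rw [Complex.I_sq]
  ring

lemma G_eq_Phi : G = Phi := by
  funext y
  rw [Phi, ← ofReal_G, Complex.ofReal_re]

lemma analyticAt_Phi {x : ℝ} (hx : x ≠ 0) : AnalyticAt ℝ Phi x := by
  have h1 : AnalyticAt ℝ (fun y : ℝ => (y : ℂ) ^ 2 * Complex.I) x :=
    ((Complex.ofRealCLM.analyticAt x).pow 2).mul analyticAt_const
  have hΘ : AnalyticAt ℂ jacobiTheta ((x : ℂ) ^ 2 * Complex.I) := by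
    refine DifferentiableOn.analyticAt (s := {τ : ℂ | 0 < τ.im})
      (fun τ hτ => (differentiableAt_jacobiTheta hτ).differentiableWithinAt) ?_
    refine (Complex.continuous_im.isOpen_preimage _ isOpen_Ioi).mem_nhds ?_
    have : ((x : ℂ) ^ 2 * Complex.I).im = x ^ 2 := by
      simp [Complex.mul_im, ← Complex.ofReal_pow]
    rw [Set.mem_preimage, Set.mem_Ioi, this]
    exact pow_pos (abs_pos.mpr hx) 2 |>.trans_le (le_of_eq (sq_abs x))
  have h2 : AnalyticAt ℝ jacobiTheta ((fun y : ℝ => (y : ℂ) ^ 2 * Complex.I) x) :=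
    hΘ.restrictScalars
  have h3 := AnalyticAt.comp (f := fun y : ℝ => (y : ℂ) ^ 2 * Complex.I) (x := x) h2 h1
  have h4 : AnalyticAt ℝ (fun y : ℝ => jacobiTheta ((y : ℂ) ^ 2 * Complex.I)) x := h3
  exact (Complex.reCLM.analyticAt _).comp h4

lemma G_inv {y : ℝ} (hy : 0 < y) : G y⁻¹ = y * G y := by
  have hy2 : (0 : ℝ) < y ^ 2 := pow_pos hy 2
  have him : ((y : ℂ) ^ 2 * Complex.I).im = y ^ 2 := by
    simp [Complex.mul_im, ← Complex.ofReal_pow]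
  set τ : UpperHalfPlane := ⟨(y : ℂ) ^ 2 * Complex.I, by rw [him]; exact hy2⟩ with hτ
  have hS := jacobiTheta_S_smul τ
  rw [UpperHalfPlane.modular_S_smul] at hS
  have hcoe : ((UpperHalfPlane.mk (-(τ : ℂ))⁻¹ τ.im_inv_neg_coe_pos : UpperHalfPlane) : ℂ)
      = ((y⁻¹ : ℝ) : ℂ) ^ 2 * Complex.I := by
    show (-(τ : ℂ))⁻¹ = _
    have : (τ : ℂ) = (y : ℂ) ^ 2 * Complex.I := rfl
    rw [this]
    have hyC : ((y : ℂ)) ≠ 0 := Complex.ofReal_ne_zero.mpr hy.ne'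
    rw [(by ring : -((y:ℂ)^2*Complex.I) = (y:ℂ)^2 * (-Complex.I)), mul_inv, inv_neg,
      Complex.inv_I, neg_neg]
    push_cast
    field_simp
  have hpow : (-Complex.I * (τ : ℂ)) ^ (1 / 2 : ℂ) = (y : ℂ) := by
    have h1 : -Complex.I * (τ : ℂ) = ((y ^ 2 : ℝ) : ℂ) := by
      show -Complex.I * ((y : ℂ) ^ 2 * Complex.I) = _
      push_cast
      rw [(by ring : -Complex.I * ((y:ℂ)^2 * Complex.I) = -(Complex.I*Complex.I) * (y:ℂ)^2),
        Complex.I_mul_I]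
      ring
    rw [h1, (by norm_num : (1/2 : ℂ) = ((1/2 : ℝ) : ℂ)), ← Complex.ofReal_cpow hy2.le, ← Real.sqrt_eq_rpow, Real.sqrt_sq hy.le]
  rw [hcoe, hpow] at hS
  have := ofReal_G y⁻¹
  rw [hS] at this
  have hGy := ofReal_G y
  have h2 : ((G y⁻¹ : ℝ) : ℂ) = ((y * G y : ℝ) : ℂ) := by
    rw [this, Complex.ofReal_mul, hGy]
  exact_mod_cast h2

lemma analyticOnNhd_G : AnalyticOnNhd ℝ G {y : ℝ | y ≠ 0} := by
  rw [G_eq_Phi]; exact fun z hz => analyticAt_Phi hz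

lemma diffG {x : ℝ} (hx : 0 < x) : DifferentiableAt ℝ G x :=
  (analyticOnNhd_G x hx.ne').differentiableAt

lemma diffG' {x : ℝ} (hx : 0 < x) : DifferentiableAt ℝ (deriv G) x :=
  (analyticOnNhd_G.deriv x hx.ne').differentiableAt

lemma id1 {x : ℝ} (hx : 0 < x) :
    deriv G x⁻¹ = -(x ^ 2) * G x - x ^ 3 * deriv G x := by
  have h : HasDerivAt (fun y : ℝ => G y⁻¹) (deriv G x⁻¹ * (-(x ^ 2)⁻¹)) x :=
    (diffG (inv_pos.mpr hx)).hasDerivAt.comp x (hasDerivAt_inv hx.ne')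
  have h2 : HasDerivAt (fun y : ℝ => y * G y) (1 * G x + x * deriv G x) x :=
    (hasDerivAt_id x).mul (diffG hx).hasDerivAt
  have hev : (fun y : ℝ => G y⁻¹) =ᶠ[nhds x] (fun y : ℝ => y * G y) :=
    Filter.eventually_of_mem (Ioi_mem_nhds hx) (fun z hz => G_inv hz)
  have heq := h.unique (h2.congr_of_eventuallyEq hev)
  have hx2 : (x : ℝ) ^ 2 ≠ 0 := pow_ne_zero 2 hx.ne'
  calc deriv G x⁻¹ = deriv G x⁻¹ * (-(x ^ 2)⁻¹) * (-(x ^ 2)) := by field_simp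
    _ = (1 * G x + x * deriv G x) * (-(x ^ 2)) := by rw [heq]
    _ = -(x ^ 2) * G x - x ^ 3 * deriv G x := by ring

lemma id2 {x : ℝ} (hx : 0 < x) :
    deriv (deriv G) x⁻¹ =
      2 * x ^ 3 * G x + 4 * x ^ 4 * deriv G x + x ^ 5 * deriv (deriv G) x := by
  have h : HasDerivAt (fun y : ℝ => deriv G y⁻¹)
      (deriv (deriv G) x⁻¹ * (-(x ^ 2)⁻¹)) x :=
    (diffG' (inv_pos.mpr hx)).hasDerivAt.comp x (hasDerivAt_inv hx.ne')
  have h2 : HasDerivAt (fun y : ℝ => -(y ^ 2) * G y - y ^ 3 * deriv G y)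
      ((-(2 * x ^ 1) * G x + -(x ^ 2) * deriv G x)
        - ((3 : ℕ) * x ^ 2 * deriv G x + x ^ 3 * deriv (deriv G) x)) x := by
    have ha := ((hasDerivAt_pow 2 x).neg.mul (diffG hx).hasDerivAt)
    have hb := ((hasDerivAt_pow 3 x).mul (diffG' hx).hasDerivAt)
    have := ha.sub hb
    refine HasDerivAt.congr_deriv (f := fun y : ℝ => -(y ^ 2) * G y - y ^ 3 * deriv G y) this ?_
    simp only [Pi.neg_apply]
    norm_num
  have hev : (fun y : ℝ => deriv G y⁻¹)
      =ᶠ[nhds x] (fun y : ℝ => -(y ^ 2) * G y - y ^ 3 * deriv G y) :=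
    Filter.eventually_of_mem (Ioi_mem_nhds hx) (fun z hz => id1 hz)
  have heq := h.unique (h2.congr_of_eventuallyEq hev)
  have hx2 : (x : ℝ) ^ 2 ≠ 0 := pow_ne_zero 2 hx.ne'
  calc deriv (deriv G) x⁻¹
      = deriv (deriv G) x⁻¹ * (-(x ^ 2)⁻¹) * (-(x ^ 2)) := by field_simp
    _ = ((-(2 * x ^ 1) * G x + -(x ^ 2) * deriv G x)
        - ((3 : ℕ) * x ^ 2 * deriv G x + x ^ 3 * deriv (deriv G) x)) * (-(x ^ 2)) := by rw [heq]
    _ = 2 * x ^ 3 * G x + 4 * x ^ 4 * deriv G x + x ^ 5 * deriv (deriv G) x := by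
        push_cast; ring

/-- `H(y) = (d/dy)[y² G′(y)] = 2y G′(y) + y² G″(y)`. -/
noncomputable def H (y : ℝ) : ℝ := 2 * y * deriv G y + y ^ 2 * deriv (deriv G) y

/-- The functional equation `y H(y) = H(1/y)` for `y > 0`. -/
theorem H_functional_equation (y : ℝ) (hy : 0 < y) : y * H y = H (1 / y) := by
  rw [one_div, H, H, id1 hy, id2 hy]
  have hy0 : y ≠ 0 := hy.ne'
  field_simp
  ring
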